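/- The first Čech cohomology of X_crs with coefficients in the sheaf of continuous real-valued functions is nonzero: for the open cover U_0 = X_crs \ ⋃_{n≥1} e_n^0, U_n = C_n \ {x} (n ≥ 1), there is a Čech 1-cocycle (given on U_0 ∩ U_n by 1/f_n for continuous functions f_n with an isolated zero at e_n^0) whose class remains nonzero in the direct limit over refinements. -/

import Mathlib

open Set Topology Filter

noncomputable section

/-- The closed unit disk. -/
def D : Type := {z : ℂ // ‖z‖ ≤ 1}

instance : TopologicalSpace D := instTopologicalSpaceSubtype

/-- The wedge point on each disk. -/
def basept : D := ⟨1, by norm_num⟩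

/-- The outer point (outer 0-cell) on each disk. -/
def outerpt : D := ⟨-1, by norm_num⟩

/-- Wedge relation: glue all copies of the base point together. -/
def wsetoid : Setoid (ℕ × D) where
  r p q := p = q ∨ (p.2 = basept ∧ q.2 = basept)
  iseqv := by
    constructor
    · intro p; exact Or.inl rfl
    · rintro p q (rfl | ⟨h1, h2⟩)
      · exact Or.inl rfl
      · exact Or.inr ⟨h2, h1⟩
    · rintro p q r (rfl | ⟨h1, h2⟩) (rfl | ⟨h3, h4⟩)
      · exact Or.inl rfl
      · exact Or.inr ⟨h3, h4⟩
      · exact Or.inr ⟨h1, h2⟩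
      · exact Or.inr ⟨h1, h4⟩

/-- The wedge of countably many closed 2-disks, with the weak (CW) topology. -/
def X : Type := Quotient wsetoid

instance : TopologicalSpace X := instTopologicalSpaceQuotient

/-- The point of the `n`-th disk with disk-coordinate `z`. -/
def pt (n : ℕ) (z : D) : X := Quotient.mk wsetoid (n, z)

/-- The origin (the wedge point `x`). -/
def origin : X := pt 0 basept

/-- The outer 0-cell `e_n^0` of the `n`-th disk. -/
def outer (n : ℕ) : X := pt n outerpt

/-- The `n`-th closed 2-cell `C_n`. -/
def cell (n : ℕ) : Set X := Set.range (pt n)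

/-- The open sets of the coarser topology `τ`: CW-open sets which either do not
contain the origin, or contain all but finitely many punctured cells `C_n \ {e_n^0}`. -/
def crsOpen (U : Set X) : Prop :=
  IsOpen U ∧ (origin ∉ U ∨ {n : ℕ | ¬ (cell n \ {outer n} ⊆ U)}.Finite)

/-- The coarser topology `τ` on the wedge of disks. -/
def crsTop : TopologicalSpace X where
  IsOpen := crsOpen
  isOpen_univ := ⟨isOpen_univ, Or.inr (Set.Finite.subset Set.finite_empty
    (fun _ hn => absurd (Set.subset_univ _) hn))⟩
  isOpen_inter := by
    rintro U V ⟨hU, hU2⟩ ⟨hV, hV2⟩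
    refine ⟨hU.inter hV, ?_⟩
    by_cases hx : origin ∈ U ∩ V
    · have h1 := hU2.resolve_left (fun h => h hx.1)
      have h2 := hV2.resolve_left (fun h => h hx.2)
      refine Or.inr ((h1.union h2).subset ?_)
      intro n hn
      by_contra hc
      simp only [Set.mem_union, Set.mem_setOf_eq, not_or, not_not] at hc
      exact hn (Set.subset_inter hc.1 hc.2)
    · exact Or.inl hx
  isOpen_sUnion := by
    intro S hS
    refine ⟨isOpen_sUnion fun U hU => (hS U hU).1, ?_⟩
    by_cases hx : origin ∈ ⋃₀ S
    · obtain ⟨U, hUS, hxU⟩ := hx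
      have h1 := (hS U hUS).2.resolve_left (fun h => h hxU)
      refine Or.inr (h1.subset ?_)
      intro n hn hsub
      exact hn (hsub.trans (Set.subset_sUnion_of_mem hUS))
    · exact Or.inl hx

/-- The open set `U₀`: complement of all the outer 0-cells. -/
def U0 : Set X := {y | ∀ n, y ≠ outer n}

/-- The set `A` of all outer 0-cells. -/
def A : Set X := Set.range outer

-- Auxiliary lemmas
namespace CechAux

lemma basept_ne_outerpt : basept ≠ outerpt := by
  intro h
  have : (1 : ℂ) = -1 := congrArg Subtype.val h
  norm_num at this

lemma pt_eq_iff {n m : ℕ} {z w : D} :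
    pt n z = pt m w ↔ (n = m ∧ z = w) ∨ (z = basept ∧ w = basept) := by
  unfold pt
  show (Quotient.mk wsetoid (n, z) : Quotient wsetoid) = Quotient.mk wsetoid (m, w) ↔ _; rw [Quotient.eq]
  show ((n, z) = (m, w) ∨ _) ↔ _
  rw [Prod.mk.injEq]

lemma pt_injective (n : ℕ) : Function.Injective (pt n) := by
  intro z w h
  rcases pt_eq_iff.1 h with ⟨_, h⟩ | ⟨h1, h2⟩
  · exact h
  · rw [h1, h2]

lemma origin_ne_outer (n : ℕ) : origin ≠ outer n := by
  intro h
  rcases pt_eq_iff.1 h with ⟨_, h⟩ | ⟨_, h2⟩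
  · exact basept_ne_outerpt h
  · exact basept_ne_outerpt h2.symm

lemma outer_eq_iff {n m : ℕ} {z : D} : pt n z = outer m ↔ n = m ∧ z = outerpt := by
  constructor
  · intro h
    rcases pt_eq_iff.1 h with ⟨h1, h2⟩ | ⟨_, h2⟩
    · exact ⟨h1, h2⟩
    · exact absurd h2.symm basept_ne_outerpt
  · rintro ⟨rfl, rfl⟩; rfl

lemma mem_cell_iff {n m : ℕ} {z : D} : pt n z ∈ cell m ↔ n = m ∨ z = basept := by
  constructor
  · rintro ⟨w, hw⟩
    rcases pt_eq_iff.1 hw.symm with ⟨h1, _⟩ | ⟨h1, _⟩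
    · exact Or.inl h1
    · exact Or.inr h1
  · rintro (rfl | rfl)
    · exact ⟨z, rfl⟩
    · exact ⟨basept, pt_eq_iff.2 (Or.inr ⟨rfl, rfl⟩)⟩

lemma origin_mem_cell (n : ℕ) : origin ∈ cell n := mem_cell_iff.2 (Or.inr rfl)

lemma isOpen_X_iff {s : Set X} :
    IsOpen s ↔ IsOpen ((Quotient.mk wsetoid) ⁻¹' s) := Iff.rfl

end CechAux
namespace CechAux

lemma continuous_pt (n : ℕ) : Continuous (pt n) := by
  exact Continuous.comp continuous_quotient_mk' (Continuous.prodMk continuous_const continuous_id)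

lemma continuous_dval : Continuous (fun z : D => z.1) := continuous_subtype_val

lemma dext_iff {z w : D} : z = w ↔ z.1 = w.1 := Subtype.ext_iff

lemma isOpen_ne_pt (w : D) : IsOpen {z : D | z ≠ w} := by
  have : {z : D | z ≠ w} = (fun z : D => z.1) ⁻¹' {w.1}ᶜ := by
    ext z
    simp only [Set.mem_setOf_eq, Set.mem_preimage, Set.mem_compl_iff, Set.mem_singleton_iff]
    exact not_congr dext_iff
  rw [this]
  exact isOpen_compl_singleton.preimage continuous_dval

lemma isOpen_compl_origin : IsOpen ({origin}ᶜ : Set X) := by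
  rw [isOpen_X_iff]
  have : (Quotient.mk wsetoid) ⁻¹' ({origin}ᶜ : Set X) = {p : ℕ × D | p.2 ≠ basept} := by
    ext ⟨n, z⟩
    simp only [Set.mem_preimage, Set.mem_compl_iff, Set.mem_singleton_iff, Set.mem_setOf_eq]
    constructor
    · intro h hz
      exact h (show pt n z = origin from pt_eq_iff.2 (Or.inr ⟨hz, rfl⟩))
    · intro h he
      rcases pt_eq_iff.1 (he : pt n z = pt 0 basept) with ⟨_, h2⟩ | ⟨h2, _⟩
      · exact h h2
      · exact h h2
  rw [this]
  exact (isOpen_ne_pt basept).preimage continuous_snd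

lemma isOpen_U0 : IsOpen U0 := by
  rw [isOpen_X_iff]
  have : (Quotient.mk wsetoid) ⁻¹' U0 = {p : ℕ × D | p.2 ≠ outerpt} := by
    ext ⟨n, z⟩
    simp only [Set.mem_preimage, Set.mem_setOf_eq]
    constructor
    · intro h hz
      exact h n (outer_eq_iff.2 ⟨rfl, hz⟩)
    · intro h m he
      exact h (outer_eq_iff.1 (he : pt n z = outer m)).2
  rw [this]
  exact (isOpen_ne_pt outerpt).preimage continuous_snd

lemma isOpen_punctured_cell (n : ℕ) : IsOpen (cell n \ {origin}) := by
  rw [isOpen_X_iff]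
  have : (Quotient.mk wsetoid) ⁻¹' (cell n \ {origin}) =
      {n} ×ˢ ({z : D | z ≠ basept}) := by
    ext ⟨m, z⟩
    simp only [Set.mem_preimage, Set.mem_diff, Set.mem_singleton_iff, Set.mem_prod,
      Set.mem_setOf_eq]
    constructor
    · rintro ⟨hc, ho⟩
      have hz : z ≠ basept := by
        intro hz
        exact ho (show pt m z = origin from pt_eq_iff.2 (Or.inr ⟨hz, rfl⟩))
      rcases mem_cell_iff.1 (hc : pt m z ∈ cell n) with rfl | h
      · exact ⟨rfl, hz⟩
      · exact absurd h hz
    · rintro ⟨rfl, hz⟩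
      refine ⟨⟨z, rfl⟩, fun he => ?_⟩
      rcases pt_eq_iff.1 (he : pt m z = pt 0 basept) with ⟨_, h2⟩ | ⟨h2, _⟩
      · exact hz h2
      · exact hz h2
  erw [this]
  exact IsOpen.prod (isOpen_discrete _) (isOpen_ne_pt basept)

lemma crsOpen_U0 : crsOpen U0 := by
  refine ⟨isOpen_U0, Or.inr ?_⟩
  have : {n : ℕ | ¬ (cell n \ {outer n} ⊆ U0)} = ∅ := by
    ext n
    simp only [Set.mem_setOf_eq, Set.mem_empty_iff_false, iff_false, not_not]
    rintro y ⟨⟨z, rfl⟩, hy⟩ m he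
    rcases outer_eq_iff.1 (he : pt n z = outer m) with ⟨rfl, rfl⟩
    exact hy rfl
  rw [this]; exact Set.finite_empty

lemma crsOpen_punctured_cell (n : ℕ) : crsOpen (cell n \ {origin}) := by
  refine ⟨isOpen_punctured_cell n, Or.inl ?_⟩
  rintro ⟨_, h⟩
  exact h rfl

lemma cover_eq_univ : U0 ∪ (⋃ n, cell n \ {origin}) = Set.univ := by
  ext y
  simp only [Set.mem_union, Set.mem_iUnion, Set.mem_univ, iff_true]
  obtain ⟨⟨n, z⟩, rfl⟩ := Quotient.exists_rep y
  by_cases hz : z = outerpt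
  · subst hz
    exact Or.inr ⟨n, ⟨outerpt, rfl⟩,
      fun he => origin_ne_outer n (Set.mem_singleton_iff.1 he).symm⟩
  · exact Or.inl (fun m he => hz (outer_eq_iff.1 (he : pt n z = outer m)).2)

end CechAux
namespace CechAux

lemma pt_eq_origin_iff {k : ℕ} {z : D} : pt k z = origin ↔ z = basept := by
  constructor
  · intro h
    rcases pt_eq_iff.1 (h : pt k z = pt 0 basept) with ⟨_, h2⟩ | ⟨h2, _⟩
    · exact h2
    · exact h2
  · intro h
    exact pt_eq_iff.2 (Or.inr ⟨h, rfl⟩)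

lemma cells_disjoint {n m : ℕ} (h : n ≠ m) :
    (cell n \ {origin}) ∩ (cell m \ {origin}) = ∅ := by
  rw [Set.eq_empty_iff_forall_notMem]
  rintro y ⟨⟨hyn, ho⟩, ⟨hym, _⟩⟩
  obtain ⟨⟨k, z⟩, rfl⟩ := Quotient.exists_rep y
  have hz : z ≠ basept := fun hb => ho (pt_eq_origin_iff.2 hb)
  rcases mem_cell_iff.1 (hyn : pt k z ∈ cell n) with rfl | hb
  · rcases mem_cell_iff.1 (hym : pt k z ∈ cell m) with rfl | hb
    · exact h rfl
    · exact hz hb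
  · exact hz hb

lemma nhds_pt_eq_map (n : ℕ) {z : D} (hz : z ≠ basept) :
    𝓝 (pt n z) = Filter.map (pt n) (𝓝 z) := by
  refine le_antisymm ?_ ((continuous_pt n).tendsto z)
  intro T hT
  rw [Filter.mem_map] at hT
  obtain ⟨V, hVT, hV, hzV⟩ := mem_nhds_iff.1 hT
  set V' := V ∩ {w : D | w ≠ basept} with hV'def
  have hV'open : IsOpen V' := hV.inter (isOpen_ne_pt basept)
  have himopen : IsOpen (pt n '' V') := by
    rw [isOpen_X_iff]
    have : (Quotient.mk wsetoid) ⁻¹' (pt n '' V') = {n} ×ˢ V' := by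
      ext ⟨m, w⟩
      simp only [Set.mem_preimage, Set.mem_image, Set.mem_prod, Set.mem_singleton_iff]
      constructor
      · rintro ⟨v, hv, hvw⟩
        rcases pt_eq_iff.1 (hvw : pt n v = pt m w) with ⟨rfl, rfl⟩ | ⟨hb, _⟩
        · exact ⟨rfl, hv⟩
        · exact absurd hb hv.2
      · rintro ⟨rfl, hw⟩
        exact ⟨w, hw, rfl⟩
    erw [this]
    exact IsOpen.prod (isOpen_discrete _) hV'open
  refine mem_nhds_iff.2 ⟨pt n '' V', ?_, himopen, ⟨z, ⟨hzV, hz⟩, rfl⟩⟩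
  rintro y ⟨v, hv, rfl⟩
  exact hVT hv.1

lemma crs_le_quot : ∀ s : Set X, IsOpen[crsTop] s → IsOpen s := fun _ h => h.1

lemma crs_nhds_eq {y : X} (hy : y ≠ origin) :
    @nhds X crsTop y = 𝓝 y := by
  refine le_antisymm ?_ ?_
  · intro T hT
    obtain ⟨O, hOT, hO, hyO⟩ := mem_nhds_iff.1 hT
    have hcrs : IsOpen[crsTop] (O ∩ {origin}ᶜ) := by
      exact ⟨hO.inter isOpen_compl_origin, Or.inl (fun h => h.2 rfl)⟩
    refine @mem_nhds_iff X crsTop _ _ |>.2 ⟨O ∩ {origin}ᶜ, fun u hu => hOT hu.1, hcrs, hyO, hy⟩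
  · intro T hT
    obtain ⟨O, hOT, hO, hyO⟩ := (@mem_nhds_iff X crsTop _ _).1 hT
    exact mem_nhds_iff.2 ⟨O, hOT, hO.1, hyO⟩

lemma crs_nhdsWithin_eq {y : X} (hy : y ≠ origin) (S : Set X) :
    @nhdsWithin X crsTop y S = 𝓝[S] y := by
  show @nhds X crsTop y ⊓ Filter.principal S = _
  rw [crs_nhds_eq hy]
  rfl

lemma crs_continuousWithinAt_iff {f : X → ℝ} {S : Set X} {y : X} (hy : y ≠ origin) :
    @ContinuousWithinAt X ℝ crsTop _ f S y ↔ ContinuousWithinAt f S y := by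
  show Filter.Tendsto f (@nhdsWithin X crsTop y S) _ ↔ _
  rw [crs_nhdsWithin_eq hy S]
  rfl

instance : Nonempty D := ⟨basept⟩

/-- Disk coordinate of a point of the `n`-th cell. -/
def coordn (n : ℕ) : X → D := Function.invFun (pt n)

lemma coordn_pt (n : ℕ) (z : D) : coordn n (pt n z) = z :=
  Function.leftInverse_invFun (pt_injective n) z

/-- The cocycle ingredient `1/f_n`. -/
def g (n : ℕ) (y : X) : ℝ := 1 / ‖(coordn n y).1 + 1‖

lemma g_pt (n : ℕ) (z : D) : g n (pt n z) = 1 / ‖z.1 + 1‖ := by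
  unfold g
  rw [coordn_pt]

lemma outerpt_val : (outerpt).1 = -1 := rfl

lemma continuousAt_g (n : ℕ) {z : D} (hz1 : z ≠ basept) (hz2 : z ≠ outerpt) :
    ContinuousAt (g n) (pt n z) := by
  have hne : z.1 + 1 ≠ 0 := by
    intro h
    apply hz2
    apply dext_iff.2
    rw [outerpt_val]
    linear_combination h
  unfold ContinuousAt
  rw [nhds_pt_eq_map n hz1, Filter.tendsto_map'_iff]
  have hfun : (g n ∘ pt n) = fun w : D => 1 / ‖w.1 + 1‖ := funext (g_pt n)
  rw [hfun, g_pt]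
  exact (continuousAt_const.div
    (((continuous_dval.add continuous_const).norm).continuousAt)
    (norm_ne_zero_iff.2 hne))

end CechAux
namespace CechAux

/-- A path in the disk approaching the outer point. -/
def dpt (t : ℝ) : D := ⟨((min (max t 0) 1 : ℝ) : ℂ) - 1, by
  set r : ℝ := min (max t 0) 1 with hr
  have h0 : 0 ≤ r := le_min (le_max_right t 0) zero_le_one
  have h1 : r ≤ 1 := min_le_right _ _
  have : ((r : ℂ) - 1) = ((r - 1 : ℝ) : ℂ) := by push_cast; ring
  rw [this, Complex.norm_real, Real.norm_eq_abs]
  rw [abs_le]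
  constructor <;> linarith⟩

lemma continuous_dpt : Continuous dpt := by
  unfold dpt
  apply Continuous.subtype_mk
  exact (Complex.continuous_ofReal.comp
    (((continuous_id.max continuous_const).min continuous_const))).sub continuous_const

lemma dpt_zero : dpt 0 = outerpt := by
  apply dext_iff.2
  show ((min (max (0:ℝ) 0) 1 : ℝ) : ℂ) - 1 = -1
  norm_num

lemma dpt_val {t : ℝ} (h0 : 0 ≤ t) (h1 : t ≤ 1) : (dpt t).1 = (t : ℂ) - 1 := by
  show ((min (max t 0) 1 : ℝ) : ℂ) - 1 = _
  rw [max_eq_left h0, min_eq_left h1]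

lemma dpt_ne_basept {t : ℝ} (h0 : 0 ≤ t) (h1 : t ≤ 1) : dpt t ≠ basept := by
  intro h
  have := dext_iff.1 h
  rw [dpt_val h0 h1] at this
  have : (t : ℂ) = 2 := by
    have hb : (basept).1 = 1 := rfl
    rw [hb] at this
    linear_combination this
  have : t = 2 := by exact_mod_cast this
  linarith

lemma dpt_ne_outerpt {t : ℝ} (h0 : 0 < t) (h1 : t ≤ 1) : dpt t ≠ outerpt := by
  intro h
  have := dext_iff.1 h
  rw [dpt_val h0.le h1, outerpt_val] at this
  have : (t : ℂ) = 0 := by linear_combination this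
  have : t = 0 := by exact_mod_cast this
  linarith

lemma g_dpt (n : ℕ) {t : ℝ} (h0 : 0 < t) (h1 : t ≤ 1) : g n (pt n (dpt t)) = 1 / t := by
  rw [g_pt, dpt_val h0.le h1]
  have : (t : ℂ) - 1 + 1 = ((t : ℝ) : ℂ) := by ring
  rw [this, Complex.norm_real, Real.norm_eq_abs, abs_of_pos h0]

end CechAux
namespace CechAux

lemma cell_eq_of_mem {n m : ℕ} {y : X} (h1 : y ∈ cell n \ {origin})
    (h2 : y ∈ cell m \ {origin}) : n = m := by
  by_contra h
  have hmem : y ∈ (cell n \ {origin}) ∩ (cell m \ {origin}) := ⟨h1, h2⟩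
  rw [cells_disjoint h] at hmem
  exact hmem

lemma contOn_g (n : ℕ) : @ContinuousOn X ℝ crsTop _ (g n) (U0 ∩ (cell n \ {origin})) := by
  intro y hy
  obtain ⟨z, rfl⟩ := hy.2.1
  have hne : pt n z ≠ origin := hy.2.2
  have hzb : z ≠ basept := fun h => hne (pt_eq_origin_iff.2 h)
  have hzo : z ≠ outerpt := fun h => hy.1 n (outer_eq_iff.2 ⟨rfl, h⟩)
  rw [crs_continuousWithinAt_iff hne]
  exact (continuousAt_g n hzb hzo).continuousWithinAt

lemma contOn_neg_g (n : ℕ) :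
    @ContinuousOn X ℝ crsTop _ (fun y => - g n y) ((cell n \ {origin}) ∩ U0) := by
  intro y hy
  obtain ⟨z, rfl⟩ := hy.1.1
  have hne : pt n z ≠ origin := hy.1.2
  have hzb : z ≠ basept := fun h => hne (pt_eq_origin_iff.2 h)
  have hzo : z ≠ outerpt := fun h => hy.2 n (outer_eq_iff.2 ⟨rfl, h⟩)
  rw [crs_continuousWithinAt_iff hne]
  exact ((continuousAt_g n hzb hzo).neg).continuousWithinAt

/-- The open cover. -/
def Ufun : ℕ → Set X := fun i => match i with
  | 0 => U0
  | n + 1 => cell n \ {origin}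

/-- The Čech 1-cocycle. -/
def ffun : ℕ → ℕ → X → ℝ := fun i j => match i, j with
  | 0, 0 => fun _ => 0
  | 0, n + 1 => g n
  | n + 1, 0 => fun y => - g n y
  | _ + 1, _ + 1 => fun _ => 0

end CechAux

open CechAux

/-- first Čech cohomology of `X_crs` with coefficients in the sheaf of
continuous real-valued functions is nonzero: for the cover by `U₀` and the punctured
cells there is a continuous Čech 1-cocycle which does not become a coboundary on any
open refinement. -/
theorem cech_H1_continuous_functions_nonzero :
    ∃ (U : ℕ → Set X) (f : ℕ → ℕ → X → ℝ),
      U 0 = U0 ∧ (∀ n : ℕ, U (n + 1) = cell n \ {origin}) ∧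
      (∀ i, IsOpen[crsTop] (U i)) ∧ (⋃ i, U i) = Set.univ ∧
      (∀ i j, @ContinuousOn X ℝ crsTop _ (f i j) (U i ∩ U j)) ∧
      (∀ i j k, ∀ y ∈ U i ∩ U j ∩ U k, f i j y + f j k y = f i k y) ∧
      ∀ (κ : Type) (V : κ → Set X) (σ : κ → ℕ),
        (∀ k, IsOpen[crsTop] (V k)) → (⋃ k, V k) = Set.univ →
        (∀ k, V k ⊆ U (σ k)) →
        ¬ ∃ s : κ → X → ℝ,
            (∀ k, @ContinuousOn X ℝ crsTop _ (s k) (V k)) ∧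
            ∀ k l, ∀ y ∈ V k ∩ V l, f (σ k) (σ l) y = s l y - s k y := by
  classical
  refine ⟨Ufun, ffun, rfl, fun n => rfl, ?_, ?_, ?_, ?_, ?_⟩
  · -- openness
    rintro (_ | n)
    · exact crsOpen_U0
    · exact crsOpen_punctured_cell n
  · -- cover
    rw [Set.eq_univ_iff_forall]
    intro y
    have hy : y ∈ U0 ∪ ⋃ n, cell n \ {origin} := by
      rw [cover_eq_univ]; trivial
    rcases hy with h | h
    · exact Set.mem_iUnion.2 ⟨0, h⟩
    · obtain ⟨n, hn⟩ := Set.mem_iUnion.1 h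
      exact Set.mem_iUnion.2 ⟨n + 1, hn⟩
  · -- continuity of the cocycle
    rintro (_ | n) (_ | m)
    · exact fun y _ => tendsto_const_nhds
    · exact contOn_g m
    · exact contOn_neg_g n
    · exact fun y _ => tendsto_const_nhds
  · -- cocycle identity
    rintro (_ | i) (_ | j) (_ | k) y hy
    · show (0:ℝ) + 0 = 0; norm_num
    · show (0:ℝ) + g k y = g k y; rw [zero_add]
    · show g j y + (- g j y) = (0:ℝ); ring
    · obtain rfl : j = k := cell_eq_of_mem hy.1.2 hy.2
      show g j y + 0 = g j y; rw [add_zero]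
    · show (- g i y) + 0 = - g i y; rw [add_zero]
    · obtain rfl : i = k := cell_eq_of_mem hy.1.1 hy.2
      show (- g i y) + g i y = (0:ℝ); ring
    · obtain rfl : i = j := cell_eq_of_mem hy.1.1 hy.1.2
      show (0:ℝ) + (- g i y) = - g i y; rw [zero_add]
    · show (0:ℝ) + 0 = 0; norm_num
  · -- no refinement trivializes the cocycle
    rintro κ V σ hVopen hVcover hVsub ⟨s, hscont, hcob⟩
    -- the piece of the refinement containing the origin
    have horig : origin ∈ ⋃ k, V k := by rw [hVcover]; trivial
    obtain ⟨k0, hk0⟩ := Set.mem_iUnion.1 horig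
    have hσk0 : σ k0 = 0 := by
      rcases h : σ k0 with _ | m
      · rfl
      · exfalso
        have hmem := hVsub k0 hk0
        rw [h] at hmem
        exact hmem.2 rfl
    -- continuity of s k0 at the origin gives a τ-neighborhood W with oscillation < 1
    have hc0 := hscont k0 origin hk0
    have hball0 : (s k0) ⁻¹' (Metric.ball (s k0 origin) 1) ∈
        @nhdsWithin X crsTop origin (V k0) := hc0 (Metric.ball_mem_nhds _ one_pos)
    obtain ⟨W, hWopen, hWmem, hWsub⟩ := (@mem_nhdsWithin X crsTop _ _ _).1 hball0
    -- both W and V k0 contain all but finitely many punctured cells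
    have hfin1 : {n : ℕ | ¬ (cell n \ {outer n} ⊆ V k0)}.Finite :=
      ((hVopen k0).2).resolve_left (fun h => h hk0)
    have hfin2 : {n : ℕ | ¬ (cell n \ {outer n} ⊆ W)}.Finite :=
      (hWopen.2).resolve_left (fun h => h hWmem)
    obtain ⟨N, hN⟩ := ((hfin1.union hfin2).infinite_compl).nonempty
    simp only [Set.mem_compl_iff, Set.mem_union, Set.mem_setOf_eq, not_or, not_not] at hN
    obtain ⟨sub1, sub2⟩ := hN
    -- the piece of the refinement containing outer N
    have houter : outer N ∈ ⋃ k, V k := by rw [hVcover]; trivial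
    obtain ⟨k1, hk1⟩ := Set.mem_iUnion.1 houter
    have hσk1 : σ k1 = N + 1 := by
      rcases h : σ k1 with _ | m
      · exfalso
        have hmem := hVsub k1 hk1
        rw [h] at hmem
        exact hmem N rfl
      · have hmem := hVsub k1 hk1
        rw [h] at hmem
        obtain ⟨z, hz⟩ := hmem.1
        obtain ⟨rfl, rfl⟩ := outer_eq_iff.1 hz
        rfl
    -- continuity of s k1 at outer N
    have hc1 := hscont k1 (outer N) hk1
    have hball1 : (s k1) ⁻¹' (Metric.ball (s k1 (outer N)) 1) ∈
        @nhdsWithin X crsTop (outer N) (V k1) := hc1 (Metric.ball_mem_nhds _ one_pos)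
    obtain ⟨W1, hW1open, hW1mem, hW1sub⟩ := (@mem_nhdsWithin X crsTop _ _ _).1 hball1
    -- the path into the N-th cell
    set hpath : ℝ → X := fun t => pt N (dpt t) with hpathdef
    have hcontpath : Continuous hpath := (continuous_pt N).comp continuous_dpt
    have hEopen : IsOpen (W1 ∩ V k1) := hW1open.1.inter (hVopen k1).1
    have hpre : IsOpen (hpath ⁻¹' (W1 ∩ V k1)) := hEopen.preimage hcontpath
    have h0mem : (0:ℝ) ∈ hpath ⁻¹' (W1 ∩ V k1) := by
      show pt N (dpt 0) ∈ W1 ∩ V k1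
      rw [dpt_zero]
      exact ⟨hW1mem, hk1⟩
    obtain ⟨ε, hε, hballsub⟩ := Metric.isOpen_iff.1 hpre 0 h0mem
    set M : ℝ := |s k0 origin| + |s k1 (outer N)| + 2 with hMdef
    have hM : 0 < M := by positivity
    have hM2 : 2 ≤ M := by
      have := abs_nonneg (s k0 origin)
      have := abs_nonneg (s k1 (outer N))
      rw [hMdef]; linarith
    set δ : ℝ := min (ε / 2) (1 / M) with hδdef
    have hδpos : 0 < δ := lt_min (by linarith) (by positivity)
    have hδ1 : δ ≤ 1 := by
      refine le_trans (min_le_right _ _) ?_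
      rw [div_le_one hM]; linarith
    have hδε : δ < ε := lt_of_le_of_lt (min_le_left _ _) (by linarith)
    have hδM : δ ≤ 1 / M := min_le_right _ _
    have h1δ : M ≤ 1 / δ := by
      rw [le_div_iff₀ hδpos]
      have h := mul_le_mul_of_nonneg_left hδM hM.le
      rw [mul_one_div, div_self hM.ne'] at h
      linarith [h, mul_comm M δ ▸ h]
    set y : X := pt N (dpt δ) with hydef
    -- y lies in W1 ∩ V k1
    have hyE : y ∈ W1 ∩ V k1 := by
      apply hballsub
      rw [Metric.mem_ball, dist_zero_right, Real.norm_eq_abs, abs_of_pos hδpos]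
      exact hδε
    -- y lies in the punctured cell, hence in V k0 and W
    have hyce : y ∈ cell N \ {outer N} := by
      refine ⟨⟨dpt δ, rfl⟩, fun h => ?_⟩
      exact dpt_ne_outerpt hδpos hδ1 (outer_eq_iff.1 h).2
    have hyV0 : y ∈ V k0 := sub1 hyce
    have hyW : y ∈ W := sub2 hyce
    -- the two bounds
    have hb0 : |s k0 y - s k0 origin| < 1 := by
      have := hWsub ⟨hyW, hyV0⟩
      rwa [Set.mem_preimage, Metric.mem_ball, Real.dist_eq] at this
    have hb1 : |s k1 y - s k1 (outer N)| < 1 := by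
      have := hW1sub ⟨hyE.1, hyE.2⟩
      rwa [Set.mem_preimage, Metric.mem_ball, Real.dist_eq] at this
    -- the cocycle value at y
    have hcoc := hcob k0 k1 y ⟨hyV0, hyE.2⟩
    rw [hσk0, hσk1] at hcoc
    have hval : ffun 0 (N + 1) y = 1 / δ := by
      show g N y = 1 / δ
      exact g_dpt N hδpos hδ1
    rw [hval] at hcoc
    -- contradiction
    rw [abs_lt] at hb0 hb1
    have e1 : s k1 (outer N) ≤ |s k1 (outer N)| := le_abs_self _
    have e0 : -|s k0 origin| ≤ s k0 origin := neg_abs_le _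
    have : 1 / δ < M := by rw [hMdef]; linarith [hb0.1, hb0.2, hb1.1, hb1.2]
    linarith

end
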